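/- Suppose ℚⁿ = X ⊕ Y is an internal direct sum of two linear subspaces, A is a finite set of p nonzero vectors contained in X, and B is a finite set of q nonzero vectors contained in Y. Then for every integer i with 0 ≤ i ≤ min(p, q), one has d_A(p − i) + d_B(i) = min over all S ∈ A_i(B) of dim span_ℚ(S). -/

import Mathlib

/-- The depth chart of a finite set `A` of vectors in `ℚⁿ`:
`d_A(k)` is the minimum of `dim span_ℚ(S)` over all `k`-element subsets `S` of `A`
when `0 ≤ k ≤ |A|`, and `0` otherwise. -/
noncomputable def depthChart {n : ℕ} (A : Finset (Fin n → ℚ)) (k : ℤ) : ℤ :=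
  if h : 0 ≤ k ∧ k ≤ (A.card : ℤ) then
    (A.powersetCard k.toNat).inf'
      (Finset.powersetCard_nonempty.mpr (by omega))
      (fun S => (Module.finrank ℚ (Submodule.span ℚ (S : Set (Fin n → ℚ))) : ℤ))
  else 0

lemma rank_union_eq {n : ℕ} {X Y : Submodule ℚ (Fin n → ℚ)} (hXY : Disjoint X Y)
    {S T : Finset (Fin n → ℚ)} (hS : (S : Set (Fin n → ℚ)) ⊆ X)
    (hT : (T : Set (Fin n → ℚ)) ⊆ Y) :
    Module.finrank ℚ (Submodule.span ℚ ((S ∪ T : Finset (Fin n → ℚ)) : Set (Fin n → ℚ))) =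
      Module.finrank ℚ (Submodule.span ℚ (S : Set (Fin n → ℚ))) +
      Module.finrank ℚ (Submodule.span ℚ (T : Set (Fin n → ℚ))) := by
  have h1 : Submodule.span ℚ ((S ∪ T : Finset (Fin n → ℚ)) : Set (Fin n → ℚ)) =
      Submodule.span ℚ (S : Set (Fin n → ℚ)) ⊔ Submodule.span ℚ (T : Set (Fin n → ℚ)) := by
    rw [Finset.coe_union, Submodule.span_union]
  have hd : Disjoint (Submodule.span ℚ (S : Set (Fin n → ℚ)))
      (Submodule.span ℚ (T : Set (Fin n → ℚ))) :=
    hXY.mono (Submodule.span_le.mpr hS) (Submodule.span_le.mpr hT)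
  have h2 := Submodule.finrank_sup_add_finrank_inf_eq
      (Submodule.span ℚ (S : Set (Fin n → ℚ))) (Submodule.span ℚ (T : Set (Fin n → ℚ)))
  rw [hd.eq_bot, finrank_bot] at h2
  rw [h1]
  omega

/-- If `ℚⁿ = X ⊕ Y`, `A` is a finite set of `p` nonzero vectors in `X`, and `B` is a
finite set of `q` nonzero vectors in `Y`, then for `0 ≤ i ≤ min p q`,
`d_A(p - i) + d_B(i)` equals the minimum of `dim span_ℚ(S)` over all sets `S` obtained
from `A` by replacing exactly `i` of its elements by `i` pairwise distinct elements
of `B`. -/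
theorem depthChart_replace {n p q : ℕ} {X Y : Submodule ℚ (Fin n → ℚ)}
    (hXY : IsCompl X Y)
    (A B : Finset (Fin n → ℚ))
    (hA0 : ∀ v ∈ A, v ≠ 0) (hAX : (A : Set (Fin n → ℚ)) ⊆ (X : Set (Fin n → ℚ)))
    (hAcard : A.card = p)
    (hB0 : ∀ v ∈ B, v ≠ 0) (hBY : (B : Set (Fin n → ℚ)) ⊆ (Y : Set (Fin n → ℚ)))
    (hBcard : B.card = q)
    (i : ℕ) (hi : i ≤ min p q) :
    depthChart A ((p : ℤ) - (i : ℤ)) + depthChart B (i : ℤ) =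
      sInf {d : ℤ | ∃ T U : Finset (Fin n → ℚ),
        T ⊆ A ∧ T.card = i ∧ U ⊆ B ∧ U.card = i ∧
        d = (Module.finrank ℚ
          (Submodule.span ℚ (((A \ T) ∪ U : Finset (Fin n → ℚ)) : Set (Fin n → ℚ))) : ℤ)} := by
  subst hAcard hBcard
  have hip : i ≤ A.card := le_trans hi (min_le_left _ _)
  have hiq : i ≤ B.card := le_trans hi (min_le_right _ _)
  have hAcond : 0 ≤ (A.card : ℤ) - (i : ℤ) ∧ (A.card : ℤ) - (i : ℤ) ≤ (A.card : ℤ) :=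
    ⟨by omega, by omega⟩
  have hBcond : 0 ≤ (i : ℤ) ∧ (i : ℤ) ≤ (B.card : ℤ) := ⟨by omega, by omega⟩
  rw [depthChart, depthChart, dif_pos hAcond, dif_pos hBcond]
  have htA : ((A.card : ℤ) - (i : ℤ)).toNat = A.card - i := by omega
  have htB : ((i : ℤ)).toNat = i := by omega
  simp only [htA, htB]
  set D := {d : ℤ | ∃ T U : Finset (Fin n → ℚ),
        T ⊆ A ∧ T.card = i ∧ U ⊆ B ∧ U.card = i ∧
        d = (Module.finrank ℚ
          (Submodule.span ℚ (((A \ T) ∪ U : Finset (Fin n → ℚ)) : Set (Fin n → ℚ))) : ℤ)} with hD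
  have hbdd : BddBelow D := by
    refine ⟨0, fun d hd => ?_⟩
    obtain ⟨T, U, _, _, _, _, rfl⟩ := hd
    positivity
  have hXYdisj : Disjoint X Y := hXY.disjoint
  apply le_antisymm
  · apply le_csInf
    · obtain ⟨T, hT, hTcard⟩ := Finset.exists_subset_card_eq hip
      obtain ⟨U, hU, hUcard⟩ := Finset.exists_subset_card_eq hiq
      exact ⟨_, T, U, hT, hTcard, hU, hUcard, rfl⟩
    · rintro d ⟨T, U, hT, hTcard, hU, hUcard, rfl⟩
      have hrw := rank_union_eq hXYdisj
        (Set.Subset.trans (Finset.coe_subset.mpr (Finset.sdiff_subset : A \ T ⊆ A)) hAX)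
        (Set.Subset.trans (Finset.coe_subset.mpr hU) hBY)
      rw [hrw]
      push_cast
      have h1 : (A.powersetCard (A.card - i)).inf'
          (Finset.powersetCard_nonempty.mpr (by omega))
          (fun S => (Module.finrank ℚ (Submodule.span ℚ (S : Set (Fin n → ℚ))) : ℤ)) ≤
          (Module.finrank ℚ (Submodule.span ℚ ((A \ T : Finset (Fin n → ℚ)) : Set (Fin n → ℚ))) : ℤ) :=
        Finset.inf'_le _ (Finset.mem_powersetCard.mpr
          ⟨Finset.sdiff_subset, by rw [Finset.card_sdiff_of_subset hT, hTcard]⟩)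
      have h2 : (B.powersetCard i).inf'
          (Finset.powersetCard_nonempty.mpr (by omega))
          (fun S => (Module.finrank ℚ (Submodule.span ℚ (S : Set (Fin n → ℚ))) : ℤ)) ≤
          (Module.finrank ℚ (Submodule.span ℚ ((U : Finset (Fin n → ℚ)) : Set (Fin n → ℚ))) : ℤ) :=
        Finset.inf'_le _ (Finset.mem_powersetCard.mpr ⟨hU, hUcard⟩)
      omega
  · -- pick minimizers
    obtain ⟨SA, hSAmem, hSAeq⟩ := Finset.exists_mem_eq_inf' (Finset.powersetCard_nonempty.mpr
      (by omega : A.card - i ≤ A.card))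
      (fun S => (Module.finrank ℚ (Submodule.span ℚ (S : Set (Fin n → ℚ))) : ℤ))
    obtain ⟨SB, hSBmem, hSBeq⟩ := Finset.exists_mem_eq_inf' (Finset.powersetCard_nonempty.mpr hiq)
      (fun S => (Module.finrank ℚ (Submodule.span ℚ (S : Set (Fin n → ℚ))) : ℤ))
    rw [Finset.mem_powersetCard] at hSAmem hSBmem
    obtain ⟨hSA_sub, hSA_card⟩ := hSAmem
    obtain ⟨hSB_sub, hSB_card⟩ := hSBmem
    have hAT : A \ (A \ SA) = SA := Finset.sdiff_sdiff_eq_self hSA_sub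
    have hmem : (Module.finrank ℚ
        (Submodule.span ℚ ((SA ∪ SB : Finset (Fin n → ℚ)) : Set (Fin n → ℚ))) : ℤ) ∈ D := by
      refine ⟨A \ SA, SB, Finset.sdiff_subset, ?_, hSB_sub, hSB_card, ?_⟩
      · rw [Finset.card_sdiff_of_subset hSA_sub]; omega
      · rw [hAT]
    calc sInf D ≤ (Module.finrank ℚ
        (Submodule.span ℚ ((SA ∪ SB : Finset (Fin n → ℚ)) : Set (Fin n → ℚ))) : ℤ) :=
          csInf_le hbdd hmem
      _ = _ := by
          rw [hSAeq, hSBeq, rank_union_eq hXYdisj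
            (Set.Subset.trans (Finset.coe_subset.mpr hSA_sub) hAX)
            (Set.Subset.trans (Finset.coe_subset.mpr hSB_sub) hBY)]
          push_cast
          ring
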